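/- With the notation of the huberized Weibull tail M-functional: define λ̃(α) = ∫₁^∞ [h̃(y^α)]ᵥᵘ dF̃_W(y; α0) − μ̃ where μ̃ = v + ∫ᵥᵘ exp(−c0·(h̃^←(z) − 1)) dz. Then λ̃(α0) = 0, i.e., α0 is a root of λ̃ (Fisher consistency of the M-estimator at the Weibull model). -/

import Mathlib

open Real Set MeasureTheory Filter

/-- `h t = (c0 t - 1) log t - 1`. -/
noncomputable def h (c0 t : ℝ) : ℝ := (c0 * t - 1) * Real.log t - 1

/-- Generalized inverse `h̃^←(y) = inf {t ≥ 1 : h t ≥ y}`. -/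
noncomputable def hinv (c0 y : ℝ) : ℝ := sInf {t : ℝ | 1 ≤ t ∧ y ≤ h c0 t}

/-- Truncation `[z]ᵥᵘ = min (max z v) u`. -/
noncomputable def trunc (v u z : ℝ) : ℝ := min (max z v) u

/-- Density of the Weibull distribution truncated at 1. -/
noncomputable def truncDens (c0 α y : ℝ) : ℝ :=
  c0 * α * y ^ (α - 1) * Real.exp (-c0 * (y ^ α - 1))

lemma h_hasDerivAt (c0 : ℝ) {t : ℝ} (ht : 0 < t) :
    HasDerivAt (h c0) (c0 * Real.log t + (c0 * t - 1) * t⁻¹) t := by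
  have h1 : HasDerivAt (fun s : ℝ => c0 * s - 1) c0 t := by
    simpa using ((hasDerivAt_id t).const_mul c0).sub_const 1
  have h2 := (h1.mul (Real.hasDerivAt_log ht.ne')).sub_const 1
  exact h2

lemma h_measurable (c0 : ℝ) : Measurable (h c0) := by
  unfold h
  exact (((measurable_const.mul measurable_id).sub_const 1).mul Real.measurable_log).sub_const 1

lemma h_continuousOn (c0 : ℝ) : ContinuousOn (h c0) (Ioi 0) := fun t ht =>
  (h_hasDerivAt c0 ht).continuousAt.continuousWithinAt

lemma h_strictMonoOn {c0 : ℝ} (hc0 : 0 < c0) : StrictMonoOn (h c0) (Ici (max 1 c0⁻¹)) := by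
  have hm1 : (1:ℝ) ≤ max 1 c0⁻¹ := le_max_left _ _
  apply strictMonoOn_of_deriv_pos (convex_Ici _)
  · exact (h_continuousOn c0).mono fun t ht => lt_of_lt_of_le one_pos (hm1.trans ht)
  · intro x hx
    rw [interior_Ici] at hx
    have hx1 : (1:ℝ) < x := lt_of_le_of_lt (le_max_left _ _) hx
    have hxc : c0⁻¹ < x := lt_of_le_of_lt (le_max_right _ _) hx
    have hx0 : (0:ℝ) < x := one_pos.trans hx1
    rw [(h_hasDerivAt c0 hx0).deriv]
    have hlog : 0 < Real.log x := Real.log_pos hx1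
    have hcx : 1 < c0 * x := by
      rw [← mul_inv_cancel₀ hc0.ne']
      exact mul_lt_mul_of_pos_left hxc hc0
    have h1 : 0 < c0 * Real.log x := by positivity
    have h2 : 0 < (c0 * x - 1) * x⁻¹ := by
      apply mul_pos (by linarith) (inv_pos.2 hx0)
    linarith

lemma h_le_neg_one {c0 : ℝ} (hc0 : 0 < c0) {t : ℝ} (ht : t ∈ Icc 1 (max 1 c0⁻¹)) :
    h c0 t ≤ -1 := by
  have hlog : 0 ≤ Real.log t := Real.log_nonneg ht.1
  have : (c0 * t - 1) * Real.log t ≤ 0 := by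
    rcases le_or_gt t c0⁻¹ with hle | hlt
    · apply mul_nonpos_of_nonpos_of_nonneg _ hlog
      have : c0 * t ≤ c0 * c0⁻¹ := mul_le_mul_of_nonneg_left hle hc0.le
      simpa [mul_inv_cancel₀ hc0.ne'] using sub_nonpos.2 this
    · have ht1 : t ≤ 1 := by
        rcases max_cases 1 c0⁻¹ with ⟨he, _⟩ | ⟨he, _⟩
        · simpa [he] using ht.2
        · exfalso; have h2 := ht.2; rw [he] at h2; exact absurd h2 (not_le.2 hlt)
      have : t = 1 := le_antisymm ht1 ht.1
      simp [this]
  simp only [h]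
  linarith

lemma h_tendsto {c0 : ℝ} (hc0 : 0 < c0) : Tendsto (h c0) atTop atTop := by
  have h1 : Tendsto (fun t : ℝ => c0 * t - 1) atTop atTop := by
    apply tendsto_atTop_add_const_right _ (-1 : ℝ) (tendsto_id.const_mul_atTop hc0) |>.congr
    intro x; simp; ring
  have h2 : Tendsto (fun t : ℝ => (c0 * t - 1) * Real.log t) atTop atTop :=
    h1.atTop_mul_atTop₀ Real.tendsto_log_atTop
  exact tendsto_atTop_add_const_right _ (-1 : ℝ) h2

lemma hinv_spec {c0 z : ℝ} (hc0 : 0 < c0) (hz : -1 < z) :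
    max 1 c0⁻¹ ≤ hinv c0 z ∧ h c0 (hinv c0 z) = z := by
  set m := max 1 c0⁻¹ with hm
  have hm1 : (1:ℝ) ≤ m := le_max_left _ _
  set S := {t : ℝ | 1 ≤ t ∧ z ≤ h c0 t} with hS
  have hsub : S ⊆ Ici m := by
    intro t ht
    by_contra hlt
    exact absurd (ht.2.trans (h_le_neg_one hc0 ⟨ht.1, (not_le.1 hlt).le⟩)) (not_le.2 hz)
  have hne : S.Nonempty := by
    obtain ⟨t, ht1, ht2⟩ := ((eventually_ge_atTop (1:ℝ)).and ((h_tendsto hc0).eventually_ge_atTop z)).exists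
    exact ⟨t, ht1, ht2⟩
  have hbdd : BddBelow S := ⟨1, fun t ht => ht.1⟩
  have hclosed : IsClosed S := by
    have : S = Ici 1 ∩ h c0 ⁻¹' Ici z := by
      ext t; simp [hS, mem_Ici]
    rw [this]
    exact ContinuousOn.preimage_isClosed_of_isClosed
      ((h_continuousOn c0).mono fun t ht => show (0:ℝ) < t from lt_of_lt_of_le one_pos ht) isClosed_Ici isClosed_Ici
  have hmem : hinv c0 z ∈ S := hclosed.csInf_mem hne hbdd
  have hge : m ≤ hinv c0 z := hsub hmem
  refine ⟨hge, ?_⟩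
  by_contra hne'
  have hlt : z < h c0 (hinv c0 z) := lt_of_le_of_ne hmem.2 (Ne.symm hne')
  have hcont : ContinuousOn (h c0) (Icc m (hinv c0 z)) :=
    (h_continuousOn c0).mono fun t ht => lt_of_lt_of_le one_pos (hm1.trans ht.1)
  have hmem' : z ∈ Icc (h c0 m) (h c0 (hinv c0 z)) :=
    ⟨(h_le_neg_one hc0 ⟨hm1, le_refl _⟩).trans hz.le, hlt.le⟩
  obtain ⟨t, htIcc, htz⟩ := intermediate_value_Icc hge hcont hmem'
  have htS : t ∈ S := ⟨hm1.trans htIcc.1, htz.ge⟩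
  have := csInf_le hbdd htS
  have : t = hinv c0 z := le_antisymm htIcc.2 this
  rw [this] at htz
  exact hne' htz

lemma key_set {c0 z : ℝ} (hc0 : 0 < c0) (hz : -1 < z) :
    Ioi (1:ℝ) ∩ {t | z < h c0 t} = Ioi (hinv c0 z) := by
  obtain ⟨ha1, ha2⟩ := hinv_spec hc0 hz
  have hm1 : (1:ℝ) ≤ max 1 c0⁻¹ := le_max_left _ _
  ext t
  simp only [mem_inter_iff, mem_Ioi, mem_setOf_eq]
  constructor
  · rintro ⟨ht1, htz⟩
    have htm : max 1 c0⁻¹ ≤ t := by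
      by_contra hlt
      push_neg at hlt
      exact absurd (htz.le.trans (h_le_neg_one hc0 ⟨ht1.le, hlt.le⟩)) (not_le.2 hz)
    by_contra hle
    push_neg at hle
    have := (h_strictMonoOn hc0).monotoneOn htm ha1 hle
    rw [ha2] at this
    exact absurd this (not_le.2 htz)
  · intro ht
    have h1 : (1:ℝ) < t := lt_of_le_of_lt (hm1.trans ha1) ht
    refine ⟨h1, ?_⟩
    have := (h_strictMonoOn hc0) ha1 (ha1.trans ht.le) ht
    rwa [ha2] at this

lemma expDens_hasDerivAt {c0 : ℝ} (t : ℝ) :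
    HasDerivAt (fun s : ℝ => -Real.exp (-c0 * (s - 1))) (c0 * Real.exp (-c0 * (t - 1))) t := by
  have h1 : HasDerivAt (fun s : ℝ => -c0 * (s - 1)) (-c0) t := by
    simpa using ((hasDerivAt_id t).sub_const 1).const_mul (-c0)
  have := (h1.exp).neg
  rw [show c0 * Real.exp (-c0 * (t - 1)) = -(Real.exp (-c0 * (t - 1)) * -c0) by ring]
  exact this

lemma expDens_tendsto {c0 : ℝ} (hc0 : 0 < c0) :
    Tendsto (fun s : ℝ => -Real.exp (-c0 * (s - 1))) atTop (nhds 0) := by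
  rw [show (0:ℝ) = -0 by ring]
  apply Filter.Tendsto.neg
  apply Real.tendsto_exp_atBot.comp
  have h1 : Tendsto (fun s : ℝ => s - 1) atTop atTop := by
    simpa [sub_eq_add_neg] using tendsto_atTop_add_const_right atTop (-1 : ℝ) tendsto_id
  exact h1.const_mul_atTop_of_neg (neg_neg_iff_pos.2 hc0)

lemma integral_expDens {c0 : ℝ} (hc0 : 0 < c0) (a : ℝ) :
    ∫ t in Ioi a, c0 * Real.exp (-c0 * (t - 1)) = Real.exp (-c0 * (a - 1)) := by
  have := integral_Ioi_of_hasDerivAt_of_nonneg' (a := a)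
    (fun x _ => expDens_hasDerivAt (c0 := c0) x)
    (fun x _ => by positivity) (expDens_tendsto hc0)
  simpa using this

lemma integrableOn_expDens {c0 : ℝ} (hc0 : 0 < c0) (a : ℝ) :
    IntegrableOn (fun t => c0 * Real.exp (-c0 * (t - 1))) (Ioi a) :=
  integrableOn_Ioi_deriv_of_nonneg' (fun x _ => expDens_hasDerivAt (c0 := c0) x)
    (fun x _ => by positivity) (expDens_tendsto hc0)

lemma trunc_sub_eq {v u : ℝ} (hvu : v ≤ u) (w : ℝ) :
    trunc v u w - v = ∫ z in Ioc v u, (Iio w).indicator (fun _ => (1:ℝ)) z := by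
  rw [setIntegral_indicator measurableSet_Iio]
  rw [setIntegral_const]
  rcases le_or_gt w u with hwu | huw
  · have : Ioc v u ∩ Iio w = Ioo v w := by
      ext z
      simp only [mem_inter_iff, mem_Ioc, mem_Iio, mem_Ioo]
      constructor
      · rintro ⟨⟨h1, _⟩, h2⟩; exact ⟨h1, h2⟩
      · rintro ⟨h1, h2⟩; exact ⟨⟨h1, h2.le.trans hwu⟩, h2⟩
    rw [this, measureReal_def, Real.volume_Ioo, ENNReal.toReal_ofReal', smul_eq_mul, mul_one]
    rcases le_or_gt w v with hwv | hvw
    · rw [sup_eq_right.2 (by linarith : w - v ≤ 0)]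
      simp [trunc, max_eq_right hwv, min_eq_left hvu]
    · rw [sup_eq_left.2 (by linarith : (0:ℝ) ≤ w - v)]
      simp [trunc, max_eq_left hvw.le, min_eq_left hwu]
  · have : Ioc v u ∩ Iio w = Ioc v u := by
      apply inter_eq_left.2
      intro z hz; exact lt_of_le_of_lt hz.2 huw
    rw [this, measureReal_def, Real.volume_Ioc, ENNReal.toReal_ofReal (by linarith), smul_eq_mul, mul_one]
    have : trunc v u w = u := by
      simp [trunc, max_eq_left (hvu.trans huw.le), min_eq_right huw.le]
    rw [this]

lemma middle {c0 v u : ℝ} (hc0 : 0 < c0) (hv : -1 ≤ v) (hvu : v < u) :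
    ∫ t in Ioi (1:ℝ), trunc v u (h c0 t) * (c0 * Real.exp (-c0 * (t - 1)))
      = v + ∫ z in Ioc v u, Real.exp (-c0 * (hinv c0 z - 1)) := by
  set D : ℝ → ℝ := fun t => c0 * Real.exp (-c0 * (t - 1)) with hD
  have hDmeas : Measurable D := by
    apply Measurable.const_mul
    exact (Real.measurable_exp.comp ((measurable_id.sub_const 1).const_mul (-c0)))
  have hDnonneg : ∀ t, 0 ≤ D t := fun t => by positivity
  have hDint : IntegrableOn D (Ioi 1) := integrableOn_expDens hc0 1
  -- integrability of trunc * D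
  have htmeas : Measurable (fun t => trunc v u (h c0 t) * D t) := by
    apply Measurable.mul _ hDmeas
    exact ((h_measurable c0).max measurable_const).min measurable_const
  set M := max |v| |u| with hM
  have hM0 : 0 ≤ M := le_trans (abs_nonneg v) (le_max_left _ _)
  have htrunc_bdd : ∀ w, |trunc v u w| ≤ M := by
    intro w
    rw [abs_le]
    constructor
    · have : -M ≤ v := by
        have := neg_abs_le v
        have h2 : -M ≤ -|v| := neg_le_neg (le_max_left _ _)
        linarith
      calc -M ≤ v := this
        _ ≤ min (max w v) u := le_min (le_max_right _ _) hvu.le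
    · exact (min_le_right _ _).trans ((le_abs_self u).trans (le_max_right _ _))
  have htint : Integrable (fun t => trunc v u (h c0 t) * D t) (volume.restrict (Ioi 1)) := by
    apply Integrable.mono (hDint.const_mul M) htmeas.aestronglyMeasurable
    filter_upwards with t
    rw [norm_mul, Real.norm_eq_abs, Real.norm_eq_abs, Real.norm_eq_abs,
      abs_of_nonneg (hDnonneg t), abs_mul, abs_of_nonneg hM0, abs_of_nonneg (hDnonneg t)]
    exact mul_le_mul_of_nonneg_right (htrunc_bdd _) (hDnonneg t)
  have hvDint : Integrable (fun t => v * D t) (volume.restrict (Ioi 1)) := hDint.const_mul v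
  -- split
  have hsplit : ∫ t in Ioi (1:ℝ), trunc v u (h c0 t) * D t
      = (∫ t in Ioi (1:ℝ), v * D t) + ∫ t in Ioi (1:ℝ), (trunc v u (h c0 t) - v) * D t := by
    have h2int : Integrable (fun t => (trunc v u (h c0 t) - v) * D t) (volume.restrict (Ioi 1)) :=
      (htint.sub hvDint).congr (Filter.Eventually.of_forall fun t => by simp; ring)
    rw [← integral_add hvDint h2int]
    exact integral_congr_ae (Filter.Eventually.of_forall fun t => by ring)
  rw [hsplit]
  have hint1 : ∫ t in Ioi (1:ℝ), v * D t = v := by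
    rw [integral_const_mul, hD, integral_expDens hc0 1]
    simp
  rw [hint1]
  congr 1
  -- Fubini part
  have hrw : ∀ t : ℝ, (trunc v u (h c0 t) - v) * D t
      = ∫ z in Ioc v u, (Iio (h c0 t)).indicator (fun _ => (1:ℝ)) z * D t := by
    intro t
    rw [integral_mul_const, ← trunc_sub_eq hvu.le]
  have hmeasA : MeasurableSet {p : ℝ × ℝ | p.2 < h c0 p.1} :=
    measurableSet_lt measurable_snd ((h_measurable c0).comp measurable_fst)
  have huncurry : (Function.uncurry fun t z => (Iio (h c0 t)).indicator (fun _ => (1:ℝ)) z * D t)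
      = fun p : ℝ × ℝ => ({p : ℝ × ℝ | p.2 < h c0 p.1}).indicator (fun _ => (1:ℝ)) p * D p.1 := by
    ext p
    simp only [Function.uncurry, Set.indicator_apply, mem_Iio, mem_setOf_eq]
  have hFmeas : AEStronglyMeasurable
      (Function.uncurry fun t z => (Iio (h c0 t)).indicator (fun _ => (1:ℝ)) z * D t)
      ((volume.restrict (Ioi 1)).prod (volume.restrict (Ioc v u))) := by
    rw [huncurry]
    exact ((measurable_const.indicator hmeasA).mul (hDmeas.comp measurable_fst)).aestronglyMeasurable
  have hGint : Integrable (fun p : ℝ × ℝ => D p.1 * (1:ℝ))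
      ((volume.restrict (Ioi 1)).prod (volume.restrict (Ioc v u))) := by
    have hone : Integrable (fun _ : ℝ => (1:ℝ)) (volume.restrict (Ioc v u)) := by
      rw [integrable_const_iff]
      right
      exact isFiniteMeasure_restrict.2 (by simp [Real.volume_Ioc])
    exact Integrable.mul_prod (f := D) (g := fun _ => (1:ℝ)) hDint hone
  have hFint : Integrable
      (Function.uncurry fun t z => (Iio (h c0 t)).indicator (fun _ => (1:ℝ)) z * D t)
      ((volume.restrict (Ioi 1)).prod (volume.restrict (Ioc v u))) := by
    apply Integrable.mono hGint hFmeas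
    filter_upwards with p
    rw [huncurry]
    by_cases hp : p ∈ {p : ℝ × ℝ | p.2 < h c0 p.1}
    · simp [Set.indicator_of_mem hp, Real.norm_eq_abs, abs_of_nonneg (hDnonneg p.1)]
    · simp [Set.indicator_of_notMem hp, Real.norm_eq_abs, abs_of_nonneg (hDnonneg p.1),
        hDnonneg p.1]
  calc ∫ t in Ioi (1:ℝ), (trunc v u (h c0 t) - v) * D t
      = ∫ t in Ioi (1:ℝ), ∫ z in Ioc v u, (Iio (h c0 t)).indicator (fun _ => (1:ℝ)) z * D t := by
        exact integral_congr_ae (Filter.Eventually.of_forall fun t => hrw t)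
    _ = ∫ z in Ioc v u, ∫ t in Ioi (1:ℝ), (Iio (h c0 t)).indicator (fun _ => (1:ℝ)) z * D t :=
        integral_integral_swap hFint
    _ = ∫ z in Ioc v u, Real.exp (-c0 * (hinv c0 z - 1)) := by
        apply setIntegral_congr_fun measurableSet_Ioc
        intro z hz
        have hz1 : -1 < z := lt_of_le_of_lt hv hz.1
        have heq : ∀ t : ℝ, (Iio (h c0 t)).indicator (fun _ => (1:ℝ)) z * D t
            = ({t : ℝ | z < h c0 t}).indicator D t := by
          intro t
          rw [Set.indicator_apply, Set.indicator_apply]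
          simp only [mem_Iio, mem_setOf_eq]
          split <;> simp
        show (∫ t in Ioi (1:ℝ), (Iio (h c0 t)).indicator (fun _ => (1:ℝ)) z * D t)
            = Real.exp (-c0 * (hinv c0 z - 1))
        have e1 : (∫ t in Ioi (1:ℝ), (Iio (h c0 t)).indicator (fun _ => (1:ℝ)) z * D t)
            = ∫ t in Ioi (1:ℝ), ({t : ℝ | z < h c0 t}).indicator D t :=
          integral_congr_ae (Filter.Eventually.of_forall heq)
        rw [e1, setIntegral_indicator (measurableSet_lt measurable_const (h_measurable c0)),
          key_set hc0 hz1]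
        exact integral_expDens hc0 _

/-- Fisher consistency: with
`λ̃(α) = ∫₁^∞ [h̃(y^α)]ᵥᵘ dF̃_W(y; α0) - μ̃`, `μ̃ = v + ∫ᵥᵘ exp(-c0 (h̃^←(z) - 1)) dz`,
one has `λ̃(α0) = 0`. -/
theorem stmt10 (c0 α0 v u : ℝ) (hc0 : 0 < c0) (hα0 : 0 < α0)
    (hv : -1 ≤ v) (hvu : v < u) :
    (∫ y in Ioi (1:ℝ), trunc v u (h c0 (y ^ α0)) * truncDens c0 α0 y)
      - (v + ∫ z in v..u, Real.exp (-c0 * (hinv c0 z - 1))) = 0 := by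
  set G : ℝ → ℝ := fun t =>
    (Ioi (1:ℝ)).indicator (fun s => trunc v u (h c0 s) * (c0 * Real.exp (-c0 * (s - 1)))) t
    with hG
  have hsub := integral_comp_rpow_Ioi G hα0.ne'
  have hrhs : ∫ y in Ioi (0:ℝ), G y
      = ∫ t in Ioi (1:ℝ), trunc v u (h c0 t) * (c0 * Real.exp (-c0 * (t - 1))) := by
    rw [hG, setIntegral_indicator measurableSet_Ioi]
    congr 1
    rw [Set.Ioi_inter_Ioi]
    norm_num
  have hlhs : ∫ x in Ioi (0:ℝ), (|α0| * x ^ (α0 - 1)) • G (x ^ α0)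
      = ∫ y in Ioi (0:ℝ),
          (Ioi (1:ℝ)).indicator (fun y => trunc v u (h c0 (y ^ α0)) * truncDens c0 α0 y) y := by
    apply setIntegral_congr_fun measurableSet_Ioi
    intro x hx
    have hx0 : (0:ℝ) < x := hx
    by_cases hx1 : 1 < x
    · have hxa : 1 < x ^ α0 := by
        rw [Real.one_lt_rpow_iff_of_pos hx0]
        exact Or.inl ⟨hx1, hα0⟩
      have hmem : x ^ α0 ∈ Ioi (1:ℝ) := hxa
      have hmem' : x ∈ Ioi (1:ℝ) := hx1
      simp only [hG, Set.indicator_of_mem hmem, Set.indicator_of_mem hmem', smul_eq_mul,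
        abs_of_pos hα0]
      unfold truncDens
      ring
    · have hxa : ¬ 1 < x ^ α0 := by
        push_neg at hx1 ⊢
        exact Real.rpow_le_one hx0.le hx1 hα0.le
      have hmem : x ^ α0 ∉ Ioi (1:ℝ) := hxa
      have hmem' : x ∉ Ioi (1:ℝ) := hx1
      simp only [hG, Set.indicator_of_notMem hmem, Set.indicator_of_notMem hmem', smul_eq_mul,
        mul_zero]
  have hlhs2 : ∫ y in Ioi (0:ℝ),
      (Ioi (1:ℝ)).indicator (fun y => trunc v u (h c0 (y ^ α0)) * truncDens c0 α0 y) y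
      = ∫ y in Ioi (1:ℝ), trunc v u (h c0 (y ^ α0)) * truncDens c0 α0 y := by
    rw [setIntegral_indicator measurableSet_Ioi]
    congr 1
    rw [Set.Ioi_inter_Ioi]
    norm_num
  have hmain : (∫ y in Ioi (1:ℝ), trunc v u (h c0 (y ^ α0)) * truncDens c0 α0 y)
      = v + ∫ z in Ioc v u, Real.exp (-c0 * (hinv c0 z - 1)) := by
    rw [← hlhs2, ← hlhs, hsub, hrhs]
    exact middle hc0 hv hvu
  rw [hmain, intervalIntegral.integral_of_le hvu.le]
  ring
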